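/- Let v₀ > 0, a ∈ [0, v₀), let m : ℝ → ℝ be continuously differentiable and nondecreasing, and let r : (a, v₀] → ℝ be differentiable with r(s) > 0 and r′(s) = 1/2 − m(s)/r(s) for all s ∈ (a, v₀]. If r(v₀) ≥ 2·m(v₀), then r(s) ≥ 2·m(s) for all s ∈ (a, v₀]. -/

import Mathlib

open Set Filter Topology

/-- A monotone function has nonnegative derivative (for any `HasDerivAt` witness). -/
lemma monotone_hasDerivAt_nonneg {m : ℝ → ℝ} (hmono : Monotone m) {x d : ℝ}
    (hd : HasDerivAt m d x) : 0 ≤ d := by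
  have h := hasDerivAt_iff_tendsto_slope.1 hd
  refine ge_of_tendsto h ?_
  filter_upwards [self_mem_nhdsWithin] with t ht
  rcases lt_or_gt_of_ne (Ne.symm ht) with h1 | h1
  · have : m x ≤ m t := hmono h1.le
    rw [slope_def_field]
    exact div_nonneg (by linarith) (by linarith)
  · have : m t ≤ m x := hmono h1.le
    rw [slope_def_field]
    exact div_nonneg_of_nonpos (by linarith) (by linarith)

/-- Lower barrier (trapping) comparison for the outgoing radial null geodesic ODE
`r′(s) = 1/2 − m(s)/r(s)` in the Vaidya spacetime: if `m` is `C¹` and nondecreasing, `r > 0`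
solves the ODE on `(a, v₀]`, and `r(v₀) ≥ 2·m(v₀)`, then `r(s) ≥ 2·m(s)` on `(a, v₀]`. -/
theorem vaidya_lower_barrier (v₀ a : ℝ) (hv₀ : 0 < v₀) (ha : 0 ≤ a) (hav : a < v₀)
    (m : ℝ → ℝ) (hm : ContDiff ℝ 1 m) (hmono : Monotone m)
    (r : ℝ → ℝ)
    (hpos : ∀ s ∈ Set.Ioc a v₀, 0 < r s)
    (hode : ∀ s ∈ Set.Ioc a v₀,
      HasDerivWithinAt r (1 / 2 - m s / r s) (Set.Ioc a v₀) s)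
    (hinit : 2 * m v₀ ≤ r v₀) :
    ∀ s ∈ Set.Ioc a v₀, 2 * m s ≤ r s := by
  intro s₀ hs₀
  by_contra hcon
  push_neg at hcon
  set f : ℝ → ℝ := fun t => r t - 2 * m t with hf
  have hfs₀ : f s₀ < 0 := by simp only [hf]; linarith
  -- derivative of f within Ioc a v₀
  have hmd : ∀ x, HasDerivAt m (deriv m x) x := fun x =>
    ((hm.differentiable one_ne_zero) x).hasDerivAt
  have hfderiv : ∀ x ∈ Set.Ioc a v₀,
      HasDerivWithinAt f (1 / 2 - m x / r x - 2 * deriv m x) (Set.Ioc a v₀) x := by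
    intro x hx
    exact (hode x hx).sub (((hmd x).const_mul 2).hasDerivWithinAt)
  -- f continuous on [s₀, v₀]
  have hsub : Set.Icc s₀ v₀ ⊆ Set.Ioc a v₀ := fun t ht => ⟨lt_of_lt_of_le hs₀.1 ht.1, ht.2⟩
  have hfc : ContinuousOn f (Set.Icc s₀ v₀) := by
    intro x hx
    exact ((hfderiv x (hsub hx)).continuousWithinAt).mono hsub
  -- the invariant set
  set S : Set ℝ := {t | f t ≤ f s₀} with hS
  have hclosed : IsClosed (S ∩ Set.Icc s₀ v₀) := by
    rw [Set.inter_comm]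
    exact hfc.preimage_isClosed_of_isClosed isClosed_Icc (isClosed_Iic (a := f s₀))
  have hmain : Set.Icc s₀ v₀ ⊆ S := by
    apply hclosed.Icc_subset_of_forall_exists_gt (le_refl (f s₀))
    intro x hx y hy
    obtain ⟨hxS, hxI⟩ := hx
    have hxIoc : x ∈ Set.Ioc a v₀ := ⟨lt_of_lt_of_le hs₀.1 hxI.1, hxI.2.le⟩
    have hrx : 0 < r x := hpos x hxIoc
    have hrlt : r x < 2 * m x := by
      have : f x ≤ f s₀ := hxS
      simp only [hf] at this hfs₀
      linarith
    -- derivative at x is negative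
    have hd1 : 1 / 2 - m x / r x < 0 := by
      rw [sub_neg, lt_div_iff₀ hrx]
      linarith
    have hd2 : 0 ≤ deriv m x := monotone_hasDerivAt_nonneg hmono (hmd x)
    have hdneg : 1 / 2 - m x / r x - 2 * deriv m x < 0 := by linarith
    -- slope tends to negative derivative from the right
    have hder := hfderiv x hxIoc
    have hslope := hasDerivWithinAt_iff_tendsto_slope.1 hder
    have hmono' : 𝓝[Set.Ioo x v₀] x ≤ 𝓝[Set.Ioc a v₀ \ {x}] x := by
      apply nhdsWithin_mono
      intro t ht
      exact ⟨⟨lt_trans hxIoc.1 ht.1, ht.2.le⟩, ne_of_gt ht.1⟩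
    have hslope' := hslope.mono_left hmono'
    have hNB : (𝓝[Set.Ioo x v₀] x).NeBot := by
      apply mem_closure_iff_nhdsWithin_neBot.1
      rw [closure_Ioo (ne_of_lt hxI.2)]
      exact ⟨le_refl x, hxI.2.le⟩
    have hev1 : ∀ᶠ t in 𝓝[Set.Ioo x v₀] x, slope f x t < 0 :=
      hslope'.eventually_lt_const hdneg
    have hev2 : ∀ᶠ t in 𝓝[Set.Ioo x v₀] x, t ∈ Set.Ioo x v₀ := self_mem_nhdsWithin
    have hev3 : ∀ᶠ t in 𝓝[Set.Ioo x v₀] x, t < y :=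
      eventually_nhdsWithin_of_eventually_nhds (eventually_lt_nhds hy)
    obtain ⟨t, ht⟩ := (hev1.and (hev2.and hev3)).exists
    have h1 : slope f x t < 0 := ht.1
    have h2 : t ∈ Set.Ioo x v₀ := ht.2.1
    have h3 : t < y := ht.2.2
    have hts : f t < f x := by
      have hpos' : 0 < t - x := by linarith [h2.1]
      rw [slope_def_field, div_neg_iff] at h1
      rcases h1 with ⟨_, h⟩ | ⟨h, _⟩
      · linarith
      · linarith
    exact ⟨t, le_trans hts.le hxS, h2.1, h3.le⟩
  have : f v₀ ≤ f s₀ := hmain ⟨hs₀.2, le_refl v₀⟩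
  simp only [hf] at this
  linarith
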